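/- arXiv:1508.05847 — 2 statements merged into one kernel-verified Lean document; each statement's English description precedes it below -/
import Mathlib

section
/- For every real number x ≥ 0, the doubly infinite series ∑_{n∈ℤ} e^{−2x} I_{|n|}(2x) n² converges and its sum equals exactly 2x. (Proposition '2nd.moment' of the paper.) -/
/-- The modified Bessel function of the first kind of nonnegative integer order `n`,
defined by the everywhere-convergent series
`I_n(x) = ∑_{j=0}^∞ (x/2)^(2j+n) / (j! (j+n)!)`. -/
noncomputable def besselI (n : ℕ) (x : ℝ) : ℝ :=
  ∑' j : ℕ, (x / 2) ^ (2 * j + n) / ((Nat.factorial j : ℝ) * (Nat.factorial (j + n) : ℝ))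

namespace BesselAux


variable (x : ℝ)

/-- c0 -/
noncomputable def c0 (n : ℕ) : ℝ := x ^ n / n.factorial
noncomputable def c1 (n : ℕ) : ℝ := (n : ℝ) * x ^ n / n.factorial
noncomputable def c2 (n : ℕ) : ℝ := (n : ℝ) * ((n : ℝ) - 1) * x ^ n / n.factorial

lemma summable_c0 : Summable (c0 x) := Real.summable_pow_div_factorial x

lemma tsum_c0 : ∑' n, c0 x n = Real.exp x := by
  rw [Real.exp_eq_exp_ℝ, NormedSpace.exp_eq_tsum_div]
  rfl

lemma shift1 : (fun n : ℕ => c1 x (n + 1)) = fun n => x * c0 x n := by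
  funext n
  have h : ((n + 1 : ℕ).factorial : ℝ) = (n + 1) * n.factorial := by
    rw [Nat.factorial_succ]; push_cast; ring
  have h1 : ((n : ℝ) + 1) ≠ 0 := by positivity
  have h2 : (n.factorial : ℝ) ≠ 0 := Nat.cast_ne_zero.2 n.factorial_ne_zero
  simp only [c1, c0, h]
  push_cast
  field_simp
  ring

lemma summable_c1 : Summable (c1 x) := by
  rw [← summable_nat_add_iff 1, shift1]
  exact (summable_c0 x).mul_left x

lemma tsum_c1 : ∑' n, c1 x n = x * Real.exp x := by
  rw [Summable.tsum_eq_zero_add (summable_c1 x)]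
  have e0 : c1 x 0 = 0 := by simp [c1]
  rw [e0, zero_add, tsum_congr (fun n => congrFun (shift1 x) n), tsum_mul_left, tsum_c0]

lemma shift2 : (fun n : ℕ => c2 x (n + 2)) = fun n => x ^ 2 * c0 x n := by
  funext n
  have h : ((n + 2 : ℕ).factorial : ℝ) = (n + 2) * ((n + 1) * n.factorial) := by
    rw [Nat.factorial_succ, Nat.factorial_succ]; push_cast; ring
  have h1 : ((n : ℝ) + 2) ≠ 0 := by positivity
  have h2 : ((n : ℝ) + 1) ≠ 0 := by positivity
  have h3 : (n.factorial : ℝ) ≠ 0 := Nat.cast_ne_zero.2 n.factorial_ne_zero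
  simp only [c2, c0, h]
  push_cast
  field_simp
  ring

lemma summable_c2 : Summable (c2 x) := by
  rw [← summable_nat_add_iff 2, shift2]
  exact (summable_c0 x).mul_left (x ^ 2)

lemma tsum_c2 : ∑' n, c2 x n = x ^ 2 * Real.exp x := by
  rw [Summable.tsum_eq_zero_add (summable_c2 x), Summable.tsum_eq_zero_add ((summable_nat_add_iff 1).2 (summable_c2 x))]
  have e0 : c2 x 0 = 0 := by simp [c2]
  have e1 : c2 x (0 + 1) = 0 := by simp [c2]
  rw [e0, e1, zero_add, zero_add]
  have := congrFun (shift2 x)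
  calc ∑' n : ℕ, c2 x (n + 1 + 1) = ∑' n : ℕ, x ^ 2 * c0 x n := by
        refine tsum_congr fun n => ?_
        rw [show n + 1 + 1 = n + 2 from rfl, this n]
    _ = x ^ 2 * Real.exp x := by rw [tsum_mul_left, tsum_c0]


lemma c0_nonneg (hx : 0 ≤ x) : 0 ≤ c0 x := fun n => by simp only [c0]; positivity
lemma c1_nonneg (hx : 0 ≤ x) : 0 ≤ c1 x := fun n => by simp only [c1]; positivity
lemma c2_nonneg (hx : 0 ≤ x) : 0 ≤ c2 x := by
  intro n
  rcases Nat.eq_zero_or_pos n with h | h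
  · simp [c2, h]
  · have : (1 : ℝ) ≤ (n : ℝ) := by exact_mod_cast h
    have : 0 ≤ (n : ℝ) * ((n : ℝ) - 1) := by nlinarith
    have := mul_nonneg this (pow_nonneg hx n)
    exact div_nonneg (by simpa [mul_assoc] using this) (Nat.cast_nonneg _)

/-- The Skellam-type function on `ℕ × ℕ`. -/
noncomputable def F (p : ℕ × ℕ) : ℝ :=
  ((p.1 : ℝ) - p.2) ^ 2 * x ^ (p.1 + p.2) / (p.1.factorial * p.2.factorial)

lemma F_eq : F x = (fun p : ℕ × ℕ => c2 x p.1 * c0 x p.2) + (fun p => c0 x p.1 * c2 x p.2)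
    + (fun p => c1 x p.1 * c0 x p.2) + (fun p => c0 x p.1 * c1 x p.2)
    - fun p => 2 * (c1 x p.1 * c1 x p.2) := by
  funext p
  obtain ⟨a, b⟩ := p
  have ha : (a.factorial : ℝ) ≠ 0 := Nat.cast_ne_zero.2 a.factorial_ne_zero
  have hb : (b.factorial : ℝ) ≠ 0 := Nat.cast_ne_zero.2 b.factorial_ne_zero
  simp only [F, c0, c1, c2, Pi.add_apply, Pi.sub_apply, pow_add]
  field_simp
  ring


lemma summable_F (hx : 0 ≤ x) : Summable (F x) := by
  rw [F_eq]
  exact (((((summable_c2 x).mul_of_nonneg (summable_c0 x) (c2_nonneg x hx) (c0_nonneg x hx)).add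
    ((summable_c0 x).mul_of_nonneg (summable_c2 x) (c0_nonneg x hx) (c2_nonneg x hx))).add
    ((summable_c1 x).mul_of_nonneg (summable_c0 x) (c1_nonneg x hx) (c0_nonneg x hx))).add
    ((summable_c0 x).mul_of_nonneg (summable_c1 x) (c0_nonneg x hx) (c1_nonneg x hx))).sub
    (((summable_c1 x).mul_of_nonneg (summable_c1 x) (c1_nonneg x hx) (c1_nonneg x hx)).mul_left 2)

lemma tsum_F (hx : 0 ≤ x) : ∑' p, F x p = 2 * x * Real.exp (2 * x) := by
  have h20 := (summable_c2 x).mul_of_nonneg (summable_c0 x) (c2_nonneg x hx) (c0_nonneg x hx)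
  have h02 := (summable_c0 x).mul_of_nonneg (summable_c2 x) (c0_nonneg x hx) (c2_nonneg x hx)
  have h10 := (summable_c1 x).mul_of_nonneg (summable_c0 x) (c1_nonneg x hx) (c0_nonneg x hx)
  have h01 := (summable_c0 x).mul_of_nonneg (summable_c1 x) (c0_nonneg x hx) (c1_nonneg x hx)
  have h11 := (summable_c1 x).mul_of_nonneg (summable_c1 x) (c1_nonneg x hx) (c1_nonneg x hx)
  simp only [F_eq, Pi.add_apply, Pi.sub_apply]
  rw [Summable.tsum_sub ((((h20.add h02).add h10).add h01)) (h11.mul_left 2),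
    Summable.tsum_add ((h20.add h02).add h10) h01, Summable.tsum_add (h20.add h02) h10, Summable.tsum_add h20 h02,
    tsum_mul_left]
  rw [← Summable.tsum_mul_tsum (summable_c2 x) (summable_c0 x) h20,
    ← Summable.tsum_mul_tsum (summable_c0 x) (summable_c2 x) h02,
    ← Summable.tsum_mul_tsum (summable_c1 x) (summable_c0 x) h10,
    ← Summable.tsum_mul_tsum (summable_c0 x) (summable_c1 x) h01,
    ← Summable.tsum_mul_tsum (summable_c1 x) (summable_c1 x) h11,
    tsum_c0, tsum_c1, tsum_c2]
  rw [show (2 : ℝ) * x = x + x by ring, Real.exp_add]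
  ring

/-- The Skellam reindexing equivalence. -/
def skel : ℤ × ℕ ≃ ℕ × ℕ where
  toFun p := (p.2 + p.1.toNat, p.2 + (-p.1).toNat)
  invFun q := ((q.1 : ℤ) - q.2, min q.1 q.2)
  left_inv p := by
    obtain ⟨n, j⟩ := p
    simp only [Prod.mk.injEq]
    constructor <;> omega
  right_inv q := by
    obtain ⟨a, b⟩ := q
    simp only [Prod.mk.injEq]
    constructor <;> omega

lemma F_skel (n : ℤ) (j : ℕ) :
    F x (skel (n, j)) = (n : ℝ) ^ 2 *
      (x ^ (2 * j + n.natAbs) / ((j.factorial : ℝ) * ((j + n.natAbs).factorial : ℝ))) := by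
  simp only [F, skel, Equiv.coe_fn_mk]
  have hcast : ((j + n.toNat : ℕ) : ℝ) - ((j + (-n).toNat : ℕ) : ℝ) = (n : ℝ) := by
    push_cast
    have : (n.toNat : ℝ) - ((-n).toNat : ℝ) = (n : ℝ) := by
      have h : (n.toNat : ℤ) - ((-n).toNat : ℤ) = n := by omega
      exact_mod_cast congrArg (Int.cast : ℤ → ℝ) h
    linarith
  have hexp : (j + n.toNat) + (j + (-n).toNat) = 2 * j + n.natAbs := by omega
  rw [hcast, hexp]
  rcases le_or_gt 0 n with h | h
  · have h1 : n.toNat = n.natAbs := by omega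
    have h2 : (-n).toNat = 0 := by omega
    rw [h1, h2, add_zero]
    ring
  · have h1 : n.toNat = 0 := by omega
    have h2 : (-n).toNat = n.natAbs := by omega
    rw [h1, h2, add_zero]
    ring

lemma F_nonneg (hx : 0 ≤ x) : 0 ≤ F x := by
  intro p
  have := pow_nonneg hx (p.1 + p.2)
  simp only [F]
  positivity

lemma besselI_eq (n : ℤ) :
    besselI n.natAbs (2 * x) = ∑' j : ℕ, x ^ (2 * j + n.natAbs) /
      ((j.factorial : ℝ) * ((j + n.natAbs).factorial : ℝ)) := by
  simp only [besselI]
  norm_num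

theorem main (hx : 0 ≤ x) :
    Summable (fun n : ℤ => Real.exp (-(2 * x)) * besselI n.natAbs (2 * x) * (n : ℝ) ^ 2) ∧
    ∑' n : ℤ, Real.exp (-(2 * x)) * besselI n.natAbs (2 * x) * (n : ℝ) ^ 2 = 2 * x := by
  have hFe : Summable (F x ∘ (skel : ℤ × ℕ ≃ ℕ × ℕ)) :=
    (Equiv.summable_iff skel).2 (summable_F x hx)
  have hnn : 0 ≤ (F x ∘ (skel : ℤ × ℕ ≃ ℕ × ℕ)) := fun p => F_nonneg x hx (skel p)
  obtain ⟨hinner, houter⟩ := (summable_prod_of_nonneg hnn).1 hFe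
  have hg : ∀ n : ℤ, Real.exp (-(2 * x)) * besselI n.natAbs (2 * x) * (n : ℝ) ^ 2
      = Real.exp (-(2 * x)) * ∑' j : ℕ, (F x ∘ skel) (n, j) := by
    intro n
    have : ∑' j : ℕ, (F x ∘ skel) (n, j)
        = (n : ℝ) ^ 2 * ∑' j : ℕ, x ^ (2 * j + n.natAbs) /
            ((j.factorial : ℝ) * ((j + n.natAbs).factorial : ℝ)) := by
      rw [← tsum_mul_left]
      exact tsum_congr fun j => F_skel x n j
    rw [this, besselI_eq]
    ring
  constructor
  · exact (houter.mul_left (Real.exp (-(2 * x)))).congr fun n => (hg n).symm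
  · calc ∑' n : ℤ, Real.exp (-(2 * x)) * besselI n.natAbs (2 * x) * (n : ℝ) ^ 2
        = ∑' n : ℤ, Real.exp (-(2 * x)) * ∑' j : ℕ, (F x ∘ skel) (n, j) :=
          tsum_congr hg
      _ = Real.exp (-(2 * x)) * ∑' n : ℤ, ∑' j : ℕ, (F x ∘ skel) (n, j) := tsum_mul_left
      _ = Real.exp (-(2 * x)) * ∑' p : ℤ × ℕ, (F x ∘ skel) p := by
          rw [Summable.tsum_prod' hFe hinner]
      _ = Real.exp (-(2 * x)) * ∑' p : ℕ × ℕ, F x p := by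
          simp only [Function.comp]
          rw [Equiv.tsum_eq skel (F x)]
      _ = 2 * x := by
          rw [tsum_F x hx, Real.exp_neg]
          have h := (Real.exp_pos (2 * x)).ne'
          field_simp


end BesselAux

/-- Second moment of the spectral measure of the SEP kernel: for every `x ≥ 0`,
the series `∑_{n ∈ ℤ} e^{−2x} I_{|n|}(2x) n²` converges and equals `2x`. -/
theorem besselI_second_moment (x : ℝ) (hx : 0 ≤ x) :
    Summable (fun n : ℤ => Real.exp (-(2 * x)) * besselI n.natAbs (2 * x) * (n : ℝ) ^ 2) ∧
    ∑' n : ℤ, Real.exp (-(2 * x)) * besselI n.natAbs (2 * x) * (n : ℝ) ^ 2 = 2 * x :=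
  BesselAux.main x hx
end

section
/- Let a > 0 and let (b_n)_{n∈ℤ} be complex numbers with ∑_{n∈ℤ} |b_n|² e^{−2a²} I_{|n|}(2a²) ≤ 1, so that the function h(t) = Re( ∑_{n∈ℤ} b_n e^{−2a²} I_{|n|}(2a²) e^{−2πint} ) is a generic element of the unit ball of the RKHS of the SEP Gaussian process with rescaling factor a. Then |h(0)| ≤ 1, and |h(t) − h(0)| ≤ 2√2 · π · a · t for every t ∈ [0, 1]. (Lemma 'constant.rkhs' of the paper.) -/
open Real

/-! ### Auxiliary series lemmas -/

lemma sep_hasSum_B (y : ℝ) : HasSum (fun p : ℕ => y ^ p / p.factorial) (Real.exp y) := by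
  rw [Real.exp_eq_exp_ℝ]; exact NormedSpace.expSeries_div_hasSum_exp y

lemma sep_hasSum_C (y : ℝ) :
    HasSum (fun p : ℕ => (p : ℝ) * y ^ p / p.factorial) (y * Real.exp y) := by
  have h1 : HasSum (fun p : ℕ => ((p+1 : ℕ) : ℝ) * y ^ (p+1) / (p+1).factorial)
      (y * Real.exp y) := by
    have := (sep_hasSum_B y).mul_left y
    refine this.congr_fun fun p => ?_
    rw [Nat.factorial_succ]; push_cast; field_simp; ring
  have := (hasSum_nat_add_iff (f := fun p : ℕ => (p : ℝ) * y ^ p / p.factorial) 1).mp h1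
  simpa using this

lemma sep_hasSum_A (y : ℝ) :
    HasSum (fun p : ℕ => (p : ℝ) * ((p:ℝ) - 1) * y ^ p / p.factorial) (y^2 * Real.exp y) := by
  have h1 : HasSum (fun p : ℕ => ((p+2 : ℕ) : ℝ) * (((p+2 : ℕ):ℝ) - 1) * y ^ (p+2) / (p+2).factorial)
      (y^2 * Real.exp y) := by
    have := (sep_hasSum_B y).mul_left (y^2)
    refine this.congr_fun fun p => ?_
    rw [show p + 2 = (p+1) + 1 by ring, Nat.factorial_succ, Nat.factorial_succ]
    push_cast; field_simp; ring
  have := (hasSum_nat_add_iff (f := fun p : ℕ => (p : ℝ) * ((p:ℝ)-1) * y ^ p / p.factorial) 2).mp h1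
  simpa [Finset.sum_range_succ] using this

/-! ### Double sums over `ℕ × ℕ` -/

lemma sep_hasSum_G {y : ℝ} (hy : 0 ≤ y) :
    HasSum (fun z : ℕ × ℕ => y ^ (z.1 + z.2) / (z.1.factorial * z.2.factorial))
      (Real.exp y * Real.exp y) := by
  have hBpos : (0 : ℕ → ℝ) ≤ fun p : ℕ => y ^ p / p.factorial :=
    fun p => div_nonneg (pow_nonneg hy p) (Nat.cast_nonneg _)
  have hB : Summable (fun p : ℕ => y ^ p / p.factorial) := (sep_hasSum_B y).summable
  have hs := Summable.mul_of_nonneg hB hB hBpos hBpos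
  have h := (sep_hasSum_B y).mul (sep_hasSum_B y) hs
  refine h.congr_fun fun z => ?_
  rw [pow_add]
  have hp : (0:ℝ) < z.1.factorial := by positivity
  have hq : (0:ℝ) < z.2.factorial := by positivity
  field_simp

lemma sep_hasSum_G2 {y : ℝ} (hy : 0 ≤ y) :
    HasSum (fun z : ℕ × ℕ =>
        ((z.1:ℝ) - (z.2:ℝ))^2 * y ^ (z.1 + z.2) / (z.1.factorial * z.2.factorial))
      (2 * y * (Real.exp y * Real.exp y)) := by
  have hBpos : (0 : ℕ → ℝ) ≤ fun p : ℕ => y ^ p / p.factorial :=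
    fun p => div_nonneg (pow_nonneg hy p) (Nat.cast_nonneg _)
  have hCpos : (0 : ℕ → ℝ) ≤ fun p : ℕ => (p:ℝ) * y ^ p / p.factorial :=
    fun p => div_nonneg (mul_nonneg (Nat.cast_nonneg _) (pow_nonneg hy p)) (Nat.cast_nonneg _)
  have hApos : (0 : ℕ → ℝ) ≤ fun p : ℕ => (p:ℝ) * ((p:ℝ) - 1) * y ^ p / p.factorial := by
    intro p
    refine div_nonneg (mul_nonneg ?_ (pow_nonneg hy p)) (Nat.cast_nonneg _)
    rcases p with _ | p
    · simp
    · have h1 : (1:ℝ) ≤ ((p+1 : ℕ):ℝ) := by push_cast; linarith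
      nlinarith
  have sB : Summable (fun p : ℕ => y ^ p / p.factorial) := (sep_hasSum_B y).summable
  have sC : Summable (fun p : ℕ => (p:ℝ) * y ^ p / p.factorial) := (sep_hasSum_C y).summable
  have sA : Summable (fun p : ℕ => (p:ℝ) * ((p:ℝ) - 1) * y ^ p / p.factorial) :=
    (sep_hasSum_A y).summable
  have sAB := Summable.mul_of_nonneg sA sB hApos hBpos
  have sBA := Summable.mul_of_nonneg sB sA hBpos hApos
  have sCB := Summable.mul_of_nonneg sC sB hCpos hBpos
  have sBC := Summable.mul_of_nonneg sB sC hBpos hCpos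
  have sCC := Summable.mul_of_nonneg sC sC hCpos hCpos
  have hAB := (sep_hasSum_A y).mul (sep_hasSum_B y) sAB
  have hBA := (sep_hasSum_B y).mul (sep_hasSum_A y) sBA
  have hCB := (sep_hasSum_C y).mul (sep_hasSum_B y) sCB
  have hBC := (sep_hasSum_B y).mul (sep_hasSum_C y) sBC
  have hCC := (sep_hasSum_C y).mul (sep_hasSum_C y) sCC
  have htot := (((hAB.add hBA).add hCB).add hBC).sub (hCC.mul_left 2)
  have key : HasSum (fun z : ℕ × ℕ =>
      ((z.1:ℝ) - (z.2:ℝ))^2 * y ^ (z.1 + z.2) / (z.1.factorial * z.2.factorial))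
      (y ^ 2 * Real.exp y * Real.exp y + Real.exp y * (y ^ 2 * Real.exp y) +
        y * Real.exp y * Real.exp y + Real.exp y * (y * Real.exp y) -
        2 * (y * Real.exp y * (y * Real.exp y))) := by
    refine htot.congr_fun fun z => ?_
    obtain ⟨p, q⟩ := z
    simp only
    have hp : (0:ℝ) < p.factorial := by positivity
    have hq : (0:ℝ) < q.factorial := by positivity
    rw [pow_add]
    field_simp
    ring
  convert key using 1
  ring

/-! ### The folding map `ℤ × ℕ → ℕ × ℕ` -/

def sepMap : ℤ × ℕ → ℕ × ℕ := fun p =>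
  if 0 ≤ p.1 then (p.2, p.2 + p.1.natAbs) else (p.2 + p.1.natAbs, p.2)

lemma sepMap_injective : Function.Injective sepMap := by
  rintro ⟨n, j⟩ ⟨m, k⟩ hp
  simp only [sepMap] at hp
  split_ifs at hp <;>
    (rw [Prod.mk.injEq] at hp; rw [Prod.mk.injEq]; constructor <;> omega)

noncomputable def sepF (x : ℝ) : ℤ × ℕ → ℝ := fun p =>
  (x / 2) ^ (2 * p.2 + p.1.natAbs) / ((Nat.factorial p.2 : ℝ) *
    (Nat.factorial (p.2 + p.1.natAbs) : ℝ))

noncomputable def sepG (x : ℝ) : ℕ × ℕ → ℝ := fun z =>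
  (x/2) ^ (z.1 + z.2) / (z.1.factorial * z.2.factorial)

noncomputable def sepG2 (x : ℝ) : ℕ × ℕ → ℝ := fun z =>
  ((z.1:ℝ) - (z.2:ℝ))^2 * (x/2) ^ (z.1 + z.2) / (z.1.factorial * z.2.factorial)

lemma sep_natAbs_sq_cast (n : ℤ) : ((n.natAbs : ℝ))^2 = (n:ℝ)^2 := by
  rw [Nat.cast_natAbs (α := ℝ)]
  push_cast
  rw [sq_abs]

lemma sepFG (x : ℝ) (p : ℤ × ℕ) : sepF x p = sepG x (sepMap p) := by
  obtain ⟨n, j⟩ := p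
  simp only [sepF, sepG, sepMap]
  split_ifs with hn
  · congr 2
    omega
  · rw [mul_comm ((Nat.factorial (j + n.natAbs) : ℝ)) ((Nat.factorial j : ℝ))]
    congr 2
    omega

lemma sepFG2 (x : ℝ) (p : ℤ × ℕ) : ((p.1:ℝ))^2 * sepF x p = sepG2 x (sepMap p) := by
  obtain ⟨n, j⟩ := p
  simp only [sepF, sepG2, sepMap]
  split_ifs with hn <;>
  · simp only
    rw [← sep_natAbs_sq_cast n]
    rw [show 2 * j + n.natAbs = j + (j + n.natAbs) by omega]
    push_cast
    ring

/-! ### Summation of Bessel functions over `ℤ` -/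

lemma sep_bessel_sums {x : ℝ} (hx : 0 ≤ x) :
    ∃ S T : ℝ,
      HasSum (fun n : ℤ => besselI n.natAbs x) S ∧ S ≤ Real.exp x ∧
      HasSum (fun n : ℤ => (n:ℝ)^2 * besselI n.natAbs x) T ∧ T ≤ x * Real.exp x := by
  have hy : (0:ℝ) ≤ x / 2 := by linarith
  have hG : HasSum (sepG x) (Real.exp (x/2) * Real.exp (x/2)) := sep_hasSum_G hy
  have hGnn : ∀ z, 0 ≤ sepG x z := fun z =>
    div_nonneg (pow_nonneg hy _) (by positivity)
  have hF : Summable (sepF x) := (hG.summable.comp_injective sepMap_injective).congr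
    fun p => (sepFG x p).symm
  have hFle : ∑' p, sepF x p ≤ Real.exp (x/2) * Real.exp (x/2) := by
    rw [← hG.tsum_eq]
    exact Summable.tsum_le_tsum_of_inj sepMap sepMap_injective (fun c _ => hGnn c)
      (fun p => le_of_eq (sepFG x p)) hF hG.summable
  have hfiber : ∀ n : ℤ, HasSum (fun j => sepF x (n, j)) (besselI n.natAbs x) := by
    intro n
    have hb : besselI n.natAbs x = ∑' j, sepF x (n, j) := rfl
    rw [hb]
    exact (hF.prod_factor n).hasSum
  have hS : HasSum (fun n : ℤ => besselI n.natAbs x) (∑' p, sepF x p) :=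
    HasSum.prod_fiberwise hF.hasSum hfiber
  have hG2 : HasSum (sepG2 x) (2 * (x/2) * (Real.exp (x/2) * Real.exp (x/2))) :=
    sep_hasSum_G2 hy
  have hG2nn : ∀ z, 0 ≤ sepG2 x z := fun z =>
    div_nonneg (mul_nonneg (sq_nonneg _) (pow_nonneg hy _)) (by positivity)
  have hF2 : Summable (fun p : ℤ × ℕ => ((p.1:ℝ))^2 * sepF x p) :=
    (hG2.summable.comp_injective sepMap_injective).congr fun p => (sepFG2 x p).symm
  have hF2le : ∑' p : ℤ × ℕ, ((p.1:ℝ))^2 * sepF x p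
      ≤ 2 * (x/2) * (Real.exp (x/2) * Real.exp (x/2)) := by
    rw [← hG2.tsum_eq]
    exact Summable.tsum_le_tsum_of_inj sepMap sepMap_injective (fun c _ => hG2nn c)
      (fun p => le_of_eq (sepFG2 x p)) hF2 hG2.summable
  have hfiber2 : ∀ n : ℤ,
      HasSum (fun j => ((n:ℝ))^2 * sepF x (n, j)) ((n:ℝ)^2 * besselI n.natAbs x) :=
    fun n => (hfiber n).mul_left _
  have hT : HasSum (fun n : ℤ => (n:ℝ)^2 * besselI n.natAbs x)
      (∑' p : ℤ × ℕ, ((p.1:ℝ))^2 * sepF x p) :=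
    HasSum.prod_fiberwise hF2.hasSum hfiber2
  have hexp : Real.exp (x/2) * Real.exp (x/2) = Real.exp x := by
    rw [← Real.exp_add]; ring_nf
  refine ⟨_, _, hS, ?_, hT, ?_⟩
  · rw [← hexp]; exact hFle
  · calc ∑' p : ℤ × ℕ, ((p.1:ℝ))^2 * sepF x p
        ≤ 2 * (x/2) * (Real.exp (x/2) * Real.exp (x/2)) := hF2le
    _ = x * Real.exp x := by rw [hexp]; ring

lemma sep_besselI_nonneg (n : ℕ) {x : ℝ} (hx : 0 ≤ x) : 0 ≤ besselI n x :=
  tsum_nonneg fun j => div_nonneg (pow_nonneg (by linarith) _) (by positivity)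

/-! ### Cauchy–Schwarz for tsums -/

lemma sep_tsum_cauchy_schwarz {f g : ℤ → ℝ} (hf : ∀ n, 0 ≤ f n) (hg : ∀ n, 0 ≤ g n)
    (hf2 : Summable (fun n => f n ^ 2)) (hg2 : Summable (fun n => g n ^ 2)) :
    Summable (fun n => f n * g n) ∧
      ∑' n, f n * g n ≤ Real.sqrt (∑' n, f n ^ 2) * Real.sqrt (∑' n, g n ^ 2) := by
  have hs : Summable (fun n => f n * g n) := by
    refine Summable.of_nonneg_of_le (fun n => mul_nonneg (hf n) (hg n)) (fun n => ?_)
      ((hf2.add hg2).div_const 2)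
    have h0 := sq_nonneg (f n - g n)
    show f n * g n ≤ ((fun m => f m ^ 2) + fun m => g m ^ 2) n / 2
    simp only [Pi.add_apply]
    nlinarith
  refine ⟨hs, Summable.tsum_le_of_sum_le hs fun s => ?_⟩
  have h1 : (∑ n ∈ s, f n * g n)^2 ≤ (∑ n ∈ s, f n^2) * (∑ n ∈ s, g n^2) :=
    Finset.sum_mul_sq_le_sq_mul_sq s f g
  have h2 : ∑ n ∈ s, f n^2 ≤ ∑' n, f n^2 := Summable.sum_le_tsum s (fun i _ => sq_nonneg _) hf2
  have h3 : ∑ n ∈ s, g n^2 ≤ ∑' n, g n^2 := Summable.sum_le_tsum s (fun i _ => sq_nonneg _) hg2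
  have h4 : (0:ℝ) ≤ ∑ n ∈ s, f n * g n :=
    Finset.sum_nonneg fun n _ => mul_nonneg (hf n) (hg n)
  have h5 : (0:ℝ) ≤ ∑' n, f n^2 := tsum_nonneg fun n => sq_nonneg _
  have h6 : (0:ℝ) ≤ ∑' n, g n^2 := tsum_nonneg fun n => sq_nonneg _
  calc ∑ n ∈ s, f n * g n = Real.sqrt ((∑ n ∈ s, f n * g n)^2) := (Real.sqrt_sq h4).symm
    _ ≤ Real.sqrt ((∑' n, f n^2) * (∑' n, g n^2)) := by
        apply Real.sqrt_le_sqrt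
        calc (∑ n ∈ s, f n * g n)^2 ≤ (∑ n ∈ s, f n^2) * (∑ n ∈ s, g n^2) := h1
          _ ≤ (∑' n, f n^2) * (∑' n, g n^2) := by
              apply mul_le_mul h2 h3 (Finset.sum_nonneg fun n _ => sq_nonneg _) h5
    _ = Real.sqrt (∑' n, f n^2) * Real.sqrt (∑' n, g n^2) := Real.sqrt_mul h5 _

/-! ### Bound on `‖exp(iθ) - 1‖` -/

lemma sep_norm_exp_I_sub_one (θ : ℝ) : ‖Complex.exp (θ * Complex.I) - 1‖ ≤ |θ| := by
  have h1 : Complex.exp (θ * Complex.I) - 1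
      = ((Real.cos θ - 1 : ℝ) : ℂ) + ((Real.sin θ : ℝ) : ℂ) * Complex.I := by
    rw [Complex.exp_mul_I]
    push_cast
    ring
  rw [h1, Complex.norm_add_mul_I]
  rw [← Real.sqrt_sq_eq_abs]
  apply Real.sqrt_le_sqrt
  have hs : Real.sin (θ/2) ^ 2 ≤ (θ/2)^2 := by
    have h := Real.abs_sin_le_abs (x := θ/2)
    nlinarith [abs_nonneg (Real.sin (θ/2)), sq_abs (Real.sin (θ/2)), sq_abs (θ/2)]
  have h2 : Real.cos θ = 1 - 2 * Real.sin (θ/2)^2 := by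
    have hh := Real.cos_sq (θ/2)
    have hh2 := Real.sin_sq_add_cos_sq (θ/2)
    rw [show 2*(θ/2) = θ by ring] at hh
    linarith
  nlinarith [Real.sin_sq_add_cos_sq θ]

lemma sep_master (a : ℝ) (ha : 0 < a) (b : ℤ → ℂ) (c : ℤ → ℝ)
    (hcnn : ∀ n, 0 ≤ c n)
    (hcle : ∑' n, c n ≤ 1) (hc1 : Summable c)
    (hc2 : Summable (fun n : ℤ => (n:ℝ)^2 * c n))
    (hc2le : ∑' n : ℤ, (n:ℝ)^2 * c n ≤ 2 * a^2)
    (hsum : Summable (fun n : ℤ => ‖b n‖ ^ 2 * c n))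
    (hball : ∑' n : ℤ, ‖b n‖ ^ 2 * c n ≤ 1)
    (h : ℝ → ℝ)
    (hdef : ∀ t : ℝ, h t =
      (∑' n : ℤ, b n * ((c n : ℝ) : ℂ) *
        Complex.exp (-(2 * π * n * t) * Complex.I)).re) :
    |h 0| ≤ 1 ∧ ∀ t ∈ Set.Icc (0 : ℝ) 1, |h t - h 0| ≤ 2 * Real.sqrt 2 * π * a * t := by
  -- norm of the general term
  have hnorm : ∀ (t : ℝ) (n : ℤ),
      ‖b n * ((c n : ℝ) : ℂ) * Complex.exp (-(2 * π * n * t) * Complex.I)‖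
        = ‖b n‖ * c n := by
    intro t n
    rw [norm_mul, norm_mul]
    have h1 : ‖((c n : ℝ) : ℂ)‖ = c n := by
      rw [Complex.norm_real, Real.norm_eq_abs, abs_of_nonneg (hcnn n)]
    have h2 : ‖Complex.exp (-(2 * π * n * t) * Complex.I)‖ = 1 := by
      rw [Complex.norm_exp]
      have : ((-(2 * π * n * t) : ℂ) * Complex.I).re = 0 := by
        have : (-(2 * (π:ℂ) * n * t)) = ((-(2 * π * n * t) : ℝ) : ℂ) := by push_cast; ring
        rw [this]
        simp
      rw [this, Real.exp_zero]
    rw [h1, h2, mul_one]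
  -- Cauchy–Schwarz applications
  have hf2 : Summable (fun n : ℤ => (‖b n‖ * Real.sqrt (c n)) ^ 2) := by
    refine hsum.congr fun n => ?_
    rw [mul_pow, Real.sq_sqrt (hcnn n)]
  have hftsum : ∑' n : ℤ, (‖b n‖ * Real.sqrt (c n)) ^ 2 = ∑' n : ℤ, ‖b n‖ ^ 2 * c n :=
    tsum_congr fun n => by rw [mul_pow, Real.sq_sqrt (hcnn n)]
  have hg2 : Summable (fun n : ℤ => (Real.sqrt (c n)) ^ 2) :=
    hc1.congr fun n => (Real.sq_sqrt (hcnn n)).symm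
  have hgtsum : ∑' n : ℤ, (Real.sqrt (c n)) ^ 2 = ∑' n : ℤ, c n :=
    tsum_congr fun n => Real.sq_sqrt (hcnn n)
  obtain ⟨hs1, hle1⟩ := sep_tsum_cauchy_schwarz
    (f := fun n => ‖b n‖ * Real.sqrt (c n)) (g := fun n => Real.sqrt (c n))
    (fun n => mul_nonneg (norm_nonneg _) (Real.sqrt_nonneg _))
    (fun n => Real.sqrt_nonneg _) hf2 hg2
  have hmul1 : ∀ n : ℤ, (‖b n‖ * Real.sqrt (c n)) * Real.sqrt (c n) = ‖b n‖ * c n :=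
    fun n => by rw [mul_assoc, Real.mul_self_sqrt (hcnn n)]
  have hS1 : Summable (fun n : ℤ => ‖b n‖ * c n) := hs1.congr hmul1
  have hS1le : ∑' n : ℤ, ‖b n‖ * c n ≤ 1 := by
    have := hle1
    rw [tsum_congr hmul1, hftsum, hgtsum] at this
    refine this.trans ?_
    have e1 : Real.sqrt (∑' n : ℤ, ‖b n‖ ^ 2 * c n) ≤ 1 := by
      rw [show (1:ℝ) = Real.sqrt 1 by rw [Real.sqrt_one]]
      exact Real.sqrt_le_sqrt hball
    have e2 : Real.sqrt (∑' n : ℤ, c n) ≤ 1 := by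
      rw [show (1:ℝ) = Real.sqrt 1 by rw [Real.sqrt_one]]
      exact Real.sqrt_le_sqrt hcle
    have e3 : 0 ≤ Real.sqrt (∑' n : ℤ, ‖b n‖ ^ 2 * c n) := Real.sqrt_nonneg _
    nlinarith [Real.sqrt_nonneg (∑' n : ℤ, c n)]
  -- second Cauchy–Schwarz
  have hg2' : Summable (fun n : ℤ => (|(n:ℝ)| * Real.sqrt (c n)) ^ 2) := by
    refine hc2.congr fun n => ?_
    rw [mul_pow, Real.sq_sqrt (hcnn n), sq_abs]
  have hgtsum' : ∑' n : ℤ, (|(n:ℝ)| * Real.sqrt (c n)) ^ 2 = ∑' n : ℤ, (n:ℝ)^2 * c n :=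
    tsum_congr fun n => by rw [mul_pow, Real.sq_sqrt (hcnn n), sq_abs]
  obtain ⟨hs2, hle2⟩ := sep_tsum_cauchy_schwarz
    (f := fun n => ‖b n‖ * Real.sqrt (c n)) (g := fun n => |(n:ℝ)| * Real.sqrt (c n))
    (fun n => mul_nonneg (norm_nonneg _) (Real.sqrt_nonneg _))
    (fun n => mul_nonneg (abs_nonneg _) (Real.sqrt_nonneg _)) hf2 hg2'
  have hmul2 : ∀ n : ℤ,
      (‖b n‖ * Real.sqrt (c n)) * (|(n:ℝ)| * Real.sqrt (c n)) = ‖b n‖ * |(n:ℝ)| * c n :=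
    fun n => by
      rw [show (‖b n‖ * Real.sqrt (c n)) * (|(n:ℝ)| * Real.sqrt (c n))
        = ‖b n‖ * |(n:ℝ)| * (Real.sqrt (c n) * Real.sqrt (c n)) by ring,
        Real.mul_self_sqrt (hcnn n)]
  have hS2 : Summable (fun n : ℤ => ‖b n‖ * |(n:ℝ)| * c n) := hs2.congr hmul2
  have hS2le : ∑' n : ℤ, ‖b n‖ * |(n:ℝ)| * c n ≤ Real.sqrt 2 * a := by
    have := hle2
    rw [tsum_congr hmul2, hftsum, hgtsum'] at this
    refine this.trans ?_
    have e1 : Real.sqrt (∑' n : ℤ, ‖b n‖ ^ 2 * c n) ≤ 1 := by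
      rw [show (1:ℝ) = Real.sqrt 1 by rw [Real.sqrt_one]]
      exact Real.sqrt_le_sqrt hball
    have e2 : Real.sqrt (∑' n : ℤ, (n:ℝ)^2 * c n) ≤ Real.sqrt 2 * a := by
      have : Real.sqrt (2 * a^2) = Real.sqrt 2 * a := by
        rw [Real.sqrt_mul (by norm_num : (0:ℝ) ≤ 2), Real.sqrt_sq ha.le]
      rw [← this]
      exact Real.sqrt_le_sqrt hc2le
    have e3 : 0 ≤ Real.sqrt (∑' n : ℤ, (n:ℝ)^2 * c n) := Real.sqrt_nonneg _
    nlinarith [Real.sqrt_nonneg (∑' n : ℤ, ‖b n‖ ^ 2 * c n), Real.sqrt_nonneg (2:ℝ),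
      ha.le]
  -- summability of the complex series
  have hZ : ∀ t : ℝ, Summable (fun n : ℤ =>
      b n * ((c n : ℝ) : ℂ) * Complex.exp (-(2 * π * n * t) * Complex.I)) := by
    intro t
    refine Summable.of_norm ?_
    exact hS1.congr fun n => (hnorm t n).symm
  constructor
  · rw [hdef 0]
    refine (Complex.abs_re_le_norm _).trans ?_
    refine (norm_tsum_le_tsum_norm (hS1.congr fun n => (hnorm 0 n).symm)).trans ?_
    rw [tsum_congr (hnorm 0)]
    exact hS1le
  · rintro t ⟨ht0, ht1⟩
    rw [hdef t, hdef 0, ← Complex.sub_re,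
      ← Summable.tsum_sub (hZ t) (hZ 0)]
    refine (Complex.abs_re_le_norm _).trans ?_
    -- pointwise bound on differences
    have hptnn : ∀ n : ℤ, 0 ≤ ‖b n‖ * |(n:ℝ)| * c n * (2 * π * t) :=
      fun n => mul_nonneg (mul_nonneg (mul_nonneg (norm_nonneg _) (abs_nonneg _)) (hcnn n))
        (by positivity)
    have hbound : ∀ n : ℤ,
        ‖b n * ((c n : ℝ) : ℂ) * Complex.exp (-(2 * π * n * t) * Complex.I)
          - b n * ((c n : ℝ) : ℂ) * Complex.exp (-(2 * π * n * (0:ℝ)) * Complex.I)‖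
        ≤ ‖b n‖ * |(n:ℝ)| * c n * (2 * π * t) := by
      intro n
      have hdiff : b n * ((c n : ℝ) : ℂ) * Complex.exp (-(2 * π * n * t) * Complex.I)
          - b n * ((c n : ℝ) : ℂ) * Complex.exp (-(2 * π * n * ((0:ℝ):ℂ)) * Complex.I)
          = b n * ((c n : ℝ) : ℂ) * (Complex.exp (-(2 * π * n * t) * Complex.I) - 1) := by
        have hz0 : Complex.exp (-(2 * (π:ℂ) * n * ((0:ℝ):ℂ)) * Complex.I) = 1 := by
          simp
        rw [hz0]
        ring
      rw [hdiff, norm_mul, norm_mul]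
      have h1 : ‖((c n : ℝ) : ℂ)‖ = c n := by
        rw [Complex.norm_real, Real.norm_eq_abs, abs_of_nonneg (hcnn n)]
      have h2 : ‖Complex.exp (-(2 * π * n * t) * Complex.I) - 1‖ ≤ 2 * π * |(n:ℝ)| * t := by
        have hcast : (-(2 * (π:ℂ) * n * t) * Complex.I)
            = (((-(2 * π * n * t) : ℝ)) : ℂ) * Complex.I := by
          push_cast; ring
        rw [hcast]
        refine (sep_norm_exp_I_sub_one _).trans ?_
        rw [abs_neg, abs_mul, abs_mul, abs_mul]
        rw [abs_of_nonneg (by norm_num : (0:ℝ) ≤ 2), abs_of_nonneg Real.pi_pos.le,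
          abs_of_nonneg ht0]
      rw [h1]
      calc ‖b n‖ * c n * ‖Complex.exp (-(2 * π * n * t) * Complex.I) - 1‖
          ≤ ‖b n‖ * c n * (2 * π * |(n:ℝ)| * t) :=
            mul_le_mul_of_nonneg_left h2 (mul_nonneg (norm_nonneg _) (hcnn n))
        _ = ‖b n‖ * |(n:ℝ)| * c n * (2 * π * t) := by ring
    have hboundsum : Summable (fun n : ℤ => ‖b n‖ * |(n:ℝ)| * c n * (2 * π * t)) :=
      hS2.mul_right _
    have hnormdiff : Summable (fun n : ℤ =>
        ‖b n * ((c n : ℝ) : ℂ) * Complex.exp (-(2 * π * n * t) * Complex.I)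
          - b n * ((c n : ℝ) : ℂ) * Complex.exp (-(2 * π * n * (0:ℝ)) * Complex.I)‖) :=
      Summable.of_nonneg_of_le (fun n => norm_nonneg _) hbound hboundsum
    refine (norm_tsum_le_tsum_norm hnormdiff).trans ?_
    refine (Summable.tsum_le_tsum hbound hnormdiff hboundsum).trans ?_
    rw [tsum_mul_right]
    calc (∑' n : ℤ, ‖b n‖ * |(n:ℝ)| * c n) * (2 * π * t)
        ≤ (Real.sqrt 2 * a) * (2 * π * t) :=
          mul_le_mul_of_nonneg_right hS2le
            (by positivity)
      _ = 2 * Real.sqrt 2 * π * a * t := by ring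

/-- Elements of the unit ball of the RKHS of the SEP Gaussian process with rescaling
factor `a` are nearly constant for small `a`: if `h` is the real part of
`t ↦ ∑_{n∈ℤ} b_n e^{−2a²} I_{|n|}(2a²) e^{−2πint}` with
`∑_{n∈ℤ} |b_n|² e^{−2a²} I_{|n|}(2a²) ≤ 1`, then `|h(0)| ≤ 1` and
`|h(t) − h(0)| ≤ 2√2 π a t` for every `t ∈ [0, 1]`. -/
theorem sep_rkhs_unit_ball_nearly_constant (a : ℝ) (ha : 0 < a) (b : ℤ → ℂ)
    (hsum : Summable (fun n : ℤ =>
      ‖b n‖ ^ 2 * (Real.exp (-(2 * a ^ 2)) * besselI n.natAbs (2 * a ^ 2))))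
    (hball : ∑' n : ℤ,
      ‖b n‖ ^ 2 * (Real.exp (-(2 * a ^ 2)) * besselI n.natAbs (2 * a ^ 2)) ≤ 1)
    (h : ℝ → ℝ)
    (hdef : ∀ t : ℝ, h t =
      (∑' n : ℤ, b n * ((Real.exp (-(2 * a ^ 2)) * besselI n.natAbs (2 * a ^ 2) : ℝ) : ℂ) *
        Complex.exp (-(2 * π * n * t) * Complex.I)).re) :
    |h 0| ≤ 1 ∧ ∀ t ∈ Set.Icc (0 : ℝ) 1, |h t - h 0| ≤ 2 * Real.sqrt 2 * π * a * t := by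
  have hx : (0:ℝ) ≤ 2 * a ^ 2 := by positivity
  obtain ⟨S, T, hS, hSle, hT, hTle⟩ := sep_bessel_sums hx
  have hepos : (0:ℝ) < Real.exp (-(2 * a ^ 2)) := Real.exp_pos _
  have hcnn : ∀ n : ℤ, 0 ≤ Real.exp (-(2 * a ^ 2)) * besselI n.natAbs (2 * a ^ 2) :=
    fun n => mul_nonneg hepos.le (sep_besselI_nonneg _ hx)
  have hone : Real.exp (-(2 * a ^ 2)) * Real.exp (2 * a ^ 2) = 1 := by
    rw [← Real.exp_add]; simp
  have hc1 : Summable (fun n : ℤ => Real.exp (-(2 * a ^ 2)) * besselI n.natAbs (2 * a ^ 2)) :=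
    hS.summable.mul_left _
  have hcle : ∑' n : ℤ, Real.exp (-(2 * a ^ 2)) * besselI n.natAbs (2 * a ^ 2) ≤ 1 := by
    rw [tsum_mul_left, hS.tsum_eq]
    calc Real.exp (-(2 * a ^ 2)) * S ≤ Real.exp (-(2 * a ^ 2)) * Real.exp (2 * a ^ 2) :=
        mul_le_mul_of_nonneg_left hSle hepos.le
      _ = 1 := hone
  have hc2 : Summable (fun n : ℤ =>
      (n:ℝ)^2 * (Real.exp (-(2 * a ^ 2)) * besselI n.natAbs (2 * a ^ 2))) :=
    (hT.summable.mul_left (Real.exp (-(2 * a ^ 2)))).congr fun n => by ring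
  have hc2le : ∑' n : ℤ,
      (n:ℝ)^2 * (Real.exp (-(2 * a ^ 2)) * besselI n.natAbs (2 * a ^ 2)) ≤ 2 * a ^ 2 := by
    have he : ∀ n : ℤ, (n:ℝ)^2 * (Real.exp (-(2 * a ^ 2)) * besselI n.natAbs (2 * a ^ 2))
        = Real.exp (-(2 * a ^ 2)) * ((n:ℝ)^2 * besselI n.natAbs (2 * a ^ 2)) :=
      fun n => by ring
    rw [tsum_congr he, tsum_mul_left, hT.tsum_eq]
    calc Real.exp (-(2 * a ^ 2)) * T
        ≤ Real.exp (-(2 * a ^ 2)) * (2 * a ^ 2 * Real.exp (2 * a ^ 2)) :=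
          mul_le_mul_of_nonneg_left hTle hepos.le
      _ = (Real.exp (-(2 * a ^ 2)) * Real.exp (2 * a ^ 2)) * (2 * a ^ 2) := by ring
      _ = 2 * a ^ 2 := by rw [hone, one_mul]
  exact sep_master a ha b
    (fun n => Real.exp (-(2 * a ^ 2)) * besselI n.natAbs (2 * a ^ 2))
    hcnn hcle hc1 hc2 hc2le hsum hball h hdef
end
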